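/- Let I = [a,b] and J = [c,d] be closed bounded real intervals and f : Jⁿ → I a function. The following are equivalent: (i) f is a quasi-Sugeno integral; (ii) f is comonotonic maxitive and comonotonic minitive; (iii) f is nondecreasing and there exists a nondecreasing function φ : J → I such that f(r ∨ x) = φ(r) ∨ f(x) and f(r ∧ x) = φ(r) ∧ f(x) for every x ∈ Jⁿ and r ∈ J, where r ∨ x (resp. r ∧ x) is the tuple with i-th component r ∨ x_i (resp. r ∧ x_i); moreover, in (iii) one may take φ(x) = f(x,…,x). -/
import Mathlib


/-- `S↑_σ(i)` (0-indexed): the set `{σ(i), σ(i+1), …, σ(n-1)}`.  For `i = n` it is empty. -/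
def SUp {n : ℕ} (σ : Equiv.Perm (Fin n)) (i : ℕ) : Finset (Fin n) :=
  (Finset.univ.filter (fun j : Fin n => i ≤ (j : ℕ))).image σ

/-- `S↓_σ(i)`: the set `{σ(0), …, σ(i-1)}`.  For `i = 0` it is empty. -/
def SDown {n : ℕ} (σ : Equiv.Perm (Fin n)) (i : ℕ) : Finset (Fin n) :=
  (Finset.univ.filter (fun j : Fin n => (j : ℕ) < i)).image σ

/-- Two tuples are comonotonic if some permutation sorts both nondecreasingly. -/
def Comonotone {n : ℕ} (x y : Fin n → ℝ) : Prop :=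
  ∃ σ : Equiv.Perm (Fin n), Monotone (x ∘ σ) ∧ Monotone (y ∘ σ)

/-- The tuple `r·1_S`. -/
def indTuple {n : ℕ} (S : Finset (Fin n)) (r : ℝ) : Fin n → ℝ :=
  fun j => if j ∈ S then r else 0

/-- The signed Choquet integral of `x` w.r.t. `v`, computed via a sorting permutation. -/
noncomputable def Cv {n : ℕ} (v : Finset (Fin n) → ℝ) (x : Fin n → ℝ) : ℝ :=
  ∑ i : Fin n,
    x (Tuple.sort x i) *
      (v (SUp (Tuple.sort x) (i : ℕ)) - v (SUp (Tuple.sort x) ((i : ℕ) + 1)))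

/-- `f` is the restriction to `Iⁿ` of a signed Choquet integral. -/
def IsSignedChoquetOn {n : ℕ} (I : Set ℝ) (f : (Fin n → ℝ) → ℝ) : Prop :=
  ∃ v : Finset (Fin n) → ℝ, v ∅ = 0 ∧
    ∀ σ : Equiv.Perm (Fin n), ∀ x : Fin n → ℝ, (∀ i, x i ∈ I) → Monotone (x ∘ σ) →
      f x = ∑ i : Fin n, x (σ i) * (v (SUp σ (i : ℕ)) - v (SUp σ ((i : ℕ) + 1)))

/-- `f` is the restriction to `Iⁿ` of a symmetric signed Choquet integral
`Č_v(x) = C_v(x⁺) - C_v(x⁻)`. -/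
def IsSymSignedChoquetOn {n : ℕ} (I : Set ℝ) (f : (Fin n → ℝ) → ℝ) : Prop :=
  ∃ v : Finset (Fin n) → ℝ, v ∅ = 0 ∧
    ∀ x : Fin n → ℝ, (∀ i, x i ∈ I) →
      f x = Cv v (fun i => max (x i) 0) - Cv v (fun i => max (-x i) 0)

/-- Comonotonic modularity (on tuples with entries in `D`). -/
def ComonModularOn {n : ℕ} (D : Set ℝ) (f : (Fin n → ℝ) → ℝ) : Prop :=
  ∀ x y : Fin n → ℝ, (∀ i, x i ∈ D) → (∀ i, y i ∈ D) → Comonotone x y →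
    f x + f y = f (fun i => min (x i) (y i)) + f (fun i => max (x i) (y i))

/-- Comonotonic additivity (on tuples with entries in `D`). -/
def ComonAdditiveOn {n : ℕ} (D : Set ℝ) (f : (Fin n → ℝ) → ℝ) : Prop :=
  ∀ x y : Fin n → ℝ, (∀ i, x i ∈ D) → (∀ i, y i ∈ D) → Comonotone x y →
    (∀ i, x i + y i ∈ D) → f (fun i => x i + y i) = f x + f y

/-- Comonotonic maxitivity. -/
def ComonMaxitiveOn {n : ℕ} (D : Set ℝ) (f : (Fin n → ℝ) → ℝ) : Prop :=
  ∀ x y : Fin n → ℝ, (∀ i, x i ∈ D) → (∀ i, y i ∈ D) → Comonotone x y →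
    f (fun i => max (x i) (y i)) = max (f x) (f y)

/-- Comonotonic minitivity. -/
def ComonMinitiveOn {n : ℕ} (D : Set ℝ) (f : (Fin n → ℝ) → ℝ) : Prop :=
  ∀ x y : Fin n → ℝ, (∀ i, x i ∈ D) → (∀ i, y i ∈ D) → Comonotone x y →
    f (fun i => min (x i) (y i)) = min (f x) (f y)

/-- Horizontal min-additivity. -/
def HorizMinAdditiveOn {n : ℕ} (D : Set ℝ) (f : (Fin n → ℝ) → ℝ) : Prop :=
  ∀ x : Fin n → ℝ, (∀ i, x i ∈ D) → ∀ c ∈ D, (∀ i, x i - min (x i) c ∈ D) →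
    f x = f (fun i => min (x i) c) + f (fun i => x i - min (x i) c)

/-- Horizontal max-additivity. -/
def HorizMaxAdditiveOn {n : ℕ} (D : Set ℝ) (f : (Fin n → ℝ) → ℝ) : Prop :=
  ∀ x : Fin n → ℝ, (∀ i, x i ∈ D) → ∀ c ∈ D, (∀ i, x i - max (x i) c ∈ D) →
    f x = f (fun i => max (x i) c) + f (fun i => x i - max (x i) c)

/-- Horizontal median-additivity (for `I` centered at `0`). -/
def HorizMedAdditiveOn {n : ℕ} (I : Set ℝ) (f : (Fin n → ℝ) → ℝ) : Prop :=
  ∀ x : Fin n → ℝ, (∀ i, x i ∈ I) → ∀ c ∈ I, 0 ≤ c →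
    f x = f (fun i => max (-c) (min (x i) c)) + f (fun i => x i - min (x i) c)
        + f (fun i => x i - max (x i) (-c))

/-- Invariance under horizontal min-differences (for domains of nonnegative tuples). -/
def InvHMinDiffOn {n : ℕ} (D : Set ℝ) (f : (Fin n → ℝ) → ℝ) : Prop :=
  ∀ x : Fin n → ℝ, (∀ i, x i ∈ D) → ∀ c ∈ D,
    f x - f (fun i => min (x i) c) =
      f (fun i => if x i ≤ c then 0 else x i) -
        f (fun i => min (if x i ≤ c then 0 else x i) c)

/-- Invariance under horizontal max-differences (for domains of nonpositive tuples). -/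
def InvHMaxDiffOn {n : ℕ} (D : Set ℝ) (f : (Fin n → ℝ) → ℝ) : Prop :=
  ∀ x : Fin n → ℝ, (∀ i, x i ∈ D) → ∀ c ∈ D,
    f x - f (fun i => max (x i) c) =
      f (fun i => if c ≤ x i then 0 else x i) -
        f (fun i => max (if c ≤ x i then 0 else x i) c)

/-- `⋀_{i ∈ S} x i`, with the convention that the empty infimum is `b`. -/
noncomputable def infWith {n : ℕ} (b : ℝ) (S : Finset (Fin n)) (x : Fin n → ℝ) : ℝ :=
  if h : S.Nonempty then S.inf' h x else b

/-- An `[a,b]`-valued capacity. -/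
def IsCapacityOn {n : ℕ} (a b : ℝ) (μ : Finset (Fin n) → ℝ) : Prop :=
  μ ∅ = a ∧ μ Finset.univ = b ∧ ∀ S T : Finset (Fin n), S ⊆ T → μ S ≤ μ T

/-- `f` is nondecreasing (in each argument) on tuples with entries in `D`. -/
def NondecreasingOn {n : ℕ} (D : Set ℝ) (f : (Fin n → ℝ) → ℝ) : Prop :=
  ∀ x y : Fin n → ℝ, (∀ i, x i ∈ D) → (∀ i, y i ∈ D) → (∀ i, x i ≤ y i) → f x ≤ f y

section AuxLemmas

variable {n : ℕ}

lemma mem_SUp {σ : Equiv.Perm (Fin n)} {k : ℕ} {j : Fin n} :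
    j ∈ SUp σ k ↔ k ≤ ((σ.symm j : Fin n) : ℕ) := by
  simp only [SUp, Finset.mem_image, Finset.mem_filter, Finset.mem_univ, true_and]
  constructor
  · rintro ⟨i, hi, rfl⟩; simpa using hi
  · intro h; exact ⟨σ.symm j, h, σ.apply_symm_apply j⟩

lemma SUp_zero (σ : Equiv.Perm (Fin n)) : SUp σ 0 = Finset.univ := by
  ext j; simp [mem_SUp]

lemma SUp_nonempty (σ : Equiv.Perm (Fin n)) {k : ℕ} (hk : k < n) :
    (SUp σ k).Nonempty :=
  ⟨σ ⟨k, hk⟩, mem_SUp.2 (by simp)⟩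

lemma SUp_ne_univ (σ : Equiv.Perm (Fin n)) (hn : 0 < n) {k : ℕ} (hk : 0 < k) :
    SUp σ k ≠ Finset.univ := by
  intro h
  have h2 : σ ⟨0, hn⟩ ∈ SUp σ k := h ▸ Finset.mem_univ _
  rw [mem_SUp] at h2
  simp only [Equiv.symm_apply_apply] at h2
  omega

lemma comonotone_of_nondiscordant {u v : Fin n → ℝ}
    (h : ∀ p q, u p < u q → v q < v p → False) : Comonotone u v := by
  refine ⟨Tuple.sort (fun i => u i + v i), ?_, ?_⟩
  · intro i j hij
    by_contra hc
    push_neg at hc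
    have hs := Tuple.monotone_sort (fun i => u i + v i) hij
    simp only [Function.comp_apply] at hs hc ⊢
    exact h _ _ hc (by linarith)
  · intro i j hij
    by_contra hc
    push_neg at hc
    have hs := Tuple.monotone_sort (fun i => u i + v i) hij
    simp only [Function.comp_apply] at hs hc ⊢
    exact h _ _ (by linarith) hc

lemma le_of_comon_max {D : Set ℝ} {f : (Fin n → ℝ) → ℝ} (hmax : ComonMaxitiveOn D f)
    {x y : Fin n → ℝ} (hx : ∀ i, x i ∈ D) (hy : ∀ i, y i ∈ D)
    (hc : Comonotone x y) (hle : ∀ i, x i ≤ y i) : f x ≤ f y := by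
  have h := hmax x y hx hy hc
  rw [show (fun i => max (x i) (y i)) = y from funext fun i => max_eq_right (hle i)] at h
  rw [h]
  exact le_max_left _ _

end AuxLemmas
section Chain

variable {n : ℕ}

lemma nondecreasing_of_comonMax {c d : ℝ} (hcd : c ≤ d) {f : (Fin n → ℝ) → ℝ}
    (hmax : ComonMaxitiveOn (Set.Icc c d) f) : NondecreasingOn (Set.Icc c d) f := by
  intro x y hx hy hle
  classical
  set V : Finset ℝ := Finset.image x Finset.univ ∪ Finset.image y Finset.univ with hV
  set z : ℝ → Fin n → ℝ := fun t i => max (x i) (min (y i) t) with hz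
  have hzD : ∀ t i, z t i ∈ Set.Icc c d := by
    intro t i
    exact ⟨le_trans (hx i).1 (le_max_left _ _),
      max_le (hx i).2 (le_trans (min_le_left _ _) (hy i).2)⟩
  have hzle : ∀ s t, s ≤ t → ∀ i, z s i ≤ z t i := fun s t hst i =>
    max_le_max le_rfl (min_le_min le_rfl hst)
  have key : ∀ s t, s ≤ t → (∀ k, x k ≤ s ∨ t ≤ x k) → (∀ k, y k ≤ s ∨ t ≤ y k) →
      f (z s) ≤ f (z t) := by
    intro s t hst hxk hyk
    refine le_of_comon_max hmax (hzD s) (hzD t) ?_ (hzle s t hst)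
    apply comonotone_of_nondiscordant
    intro p q hpq hqp
    apply absurd hqp (not_lt.2 ?_)
    apply max_le
    · calc x p ≤ z s p := le_max_left _ _
        _ ≤ z s q := hpq.le
        _ ≤ z t q := hzle s t hst q
    · rcases hyk p with h | h
      · rw [min_eq_left (le_trans h hst)]
        calc y p = min (y p) s := (min_eq_left h).symm
          _ ≤ z s p := le_max_right _ _
          _ ≤ z s q := hpq.le
          _ ≤ z t q := hzle s t hst q
      · rw [min_eq_right h]
        have hsp : s ≤ z s p := by
          calc s = min (y p) s := (min_eq_right (le_trans hst h)).symm
            _ ≤ z s p := le_max_right _ _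
        have hsq : s < z s q := lt_of_le_of_lt hsp hpq
        have hxq : s < x q := by
          rcases le_or_gt (x q) s with h1 | h1
          · have h2 : z s q ≤ s := max_le h1 (min_le_right _ _)
            linarith
          · exact h1
        have h3 : t ≤ x q := by
          rcases hxk q with h2 | h2
          · linarith
          · exact h2
        exact le_trans h3 (le_max_left _ _)
  have main : ∀ m : ℕ, ∀ s t : ℝ, s ≤ t →
      (V.filter (fun v => s < v ∧ v < t)).card ≤ m → f (z s) ≤ f (z t) := by
    intro m
    induction m with
    | zero =>
      intro s t hst hcard
      have hempty : V.filter (fun v => s < v ∧ v < t) = ∅ :=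
        Finset.card_eq_zero.1 (Nat.le_zero.1 hcard)
      have hnotin : ∀ v ∈ V, ¬(s < v ∧ v < t) := by
        intro v hv hc
        have h4 : v ∈ V.filter (fun v => s < v ∧ v < t) := Finset.mem_filter.2 ⟨hv, hc⟩
        simp [hempty] at h4
      refine key s t hst ?_ ?_
      · intro k
        have h5 := hnotin (x k) (by simp [hV])
        by_contra hc
        push_neg at hc
        exact h5 ⟨hc.1, hc.2⟩
      · intro k
        have h5 := hnotin (y k) (by simp [hV])
        by_contra hc
        push_neg at hc
        exact h5 ⟨hc.1, hc.2⟩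
    | succ m ih =>
      intro s t hst hcard
      rcases Finset.eq_empty_or_nonempty (V.filter (fun v => s < v ∧ v < t)) with he | hne
      · exact ih s t hst (by simp [he])
      · obtain ⟨v, hv⟩ := hne
        rw [Finset.mem_filter] at hv
        obtain ⟨hvV, hsv, hvt⟩ := hv
        have hsub1 : V.filter (fun w => s < w ∧ w < v) ⊆
            (V.filter (fun w => s < w ∧ w < t)).erase v := by
          intro w hw
          rw [Finset.mem_filter] at hw
          rw [Finset.mem_erase, Finset.mem_filter]
          exact ⟨ne_of_lt hw.2.2, hw.1, hw.2.1, lt_trans hw.2.2 hvt⟩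
        have hsub2 : V.filter (fun w => v < w ∧ w < t) ⊆
            (V.filter (fun w => s < w ∧ w < t)).erase v := by
          intro w hw
          rw [Finset.mem_filter] at hw
          rw [Finset.mem_erase, Finset.mem_filter]
          exact ⟨(ne_of_lt hw.2.1).symm, hw.1, lt_trans hsv hw.2.1, hw.2.2⟩
        have hcv : v ∈ V.filter (fun w => s < w ∧ w < t) :=
          Finset.mem_filter.2 ⟨hvV, hsv, hvt⟩
        have hce : ((V.filter (fun w => s < w ∧ w < t)).erase v).card ≤ m := by
          rw [Finset.card_erase_of_mem hcv]
          omega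
        exact le_trans
          (ih s v hsv.le (le_trans (Finset.card_le_card hsub1) hce))
          (ih v t hvt.le (le_trans (Finset.card_le_card hsub2) hce))
  have h0 : z c = x := by
    funext i
    simp only [hz]
    rw [min_eq_right (hy i).1, max_eq_left (hx i).1]
  have h1 : z d = y := by
    funext i
    simp only [hz]
    rw [min_eq_left (hy i).2, max_eq_right (hle i)]
  have := main V.card c d hcd (Finset.card_le_card (Finset.filter_subset _ _))
  rwa [h0, h1] at this

end Chain
section Rep

lemma rep_of_identities {n : ℕ} (hn : 0 < n) {a b c d : ℝ} (hab : a ≤ b) (hcd : c ≤ d)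
    {f : (Fin n → ℝ) → ℝ}
    (hfI : ∀ x : Fin n → ℝ, (∀ i, x i ∈ Set.Icc c d) → f x ∈ Set.Icc a b)
    (hmono : NondecreasingOn (Set.Icc c d) f)
    (φ : ℝ → ℝ)
    (hφm : ∀ y ∈ Set.Icc c d, ∀ z ∈ Set.Icc c d, y ≤ z → φ y ≤ φ z)
    (hφr : ∀ y ∈ Set.Icc c d, φ y ∈ Set.Icc a b)
    (hid : ∀ x : Fin n → ℝ, (∀ i, x i ∈ Set.Icc c d) → ∀ r ∈ Set.Icc c d,
      f (fun i => max r (x i)) = max (φ r) (f x) ∧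
      f (fun i => min r (x i)) = min (φ r) (f x)) :
    ∃ μ : Finset (Fin n) → ℝ, IsCapacityOn a b μ ∧
      ∀ σ : Equiv.Perm (Fin n), ∀ x : Fin n → ℝ,
        (∀ i, x i ∈ Set.Icc c d) → Monotone (x ∘ σ) →
        f x = Finset.sup' Finset.univ ⟨⟨0, hn⟩, Finset.mem_univ _⟩
          (fun i : Fin n => min (φ (x (σ i))) (μ (SUp σ (i : ℕ)))) := by
  classical
  have hcD : c ∈ Set.Icc c d := ⟨le_rfl, hcd⟩
  have hdD : d ∈ Set.Icc c d := ⟨hcd, le_rfl⟩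
  set e : Finset (Fin n) → Fin n → ℝ := fun S j => if j ∈ S then d else c with he
  have heD : ∀ S j, e S j ∈ Set.Icc c d := by
    intro S j
    simp only [he]
    split
    · exact hdD
    · exact hcD
  set ν : Finset (Fin n) → ℝ := fun S => f (e S) with hν
  have hνr : ∀ S, ν S ∈ Set.Icc a b := fun S => hfI _ (heD S)
  have hνmono : ∀ S T : Finset (Fin n), S ⊆ T → ν S ≤ ν T := by
    intro S T hST
    refine hmono _ _ (heD S) (heD T) ?_
    intro j
    simp only [he]
    by_cases hj : j ∈ S
    · rw [if_pos hj, if_pos (hST hj)]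
    · rw [if_neg hj]
      split
      · exact hcd
      · exact le_rfl
  set μ : Finset (Fin n) → ℝ :=
    fun S => if S = ∅ then a else if S = Finset.univ then b else ν S with hμ
  have hne : (Finset.univ : Finset (Fin n)) ≠ ∅ := by
    have : Nonempty (Fin n) := ⟨⟨0, hn⟩⟩
    exact Finset.univ_nonempty.ne_empty
  have hμ0 : μ ∅ = a := by simp [hμ]
  have hμ1 : μ Finset.univ = b := by simp [hμ, hne]
  have hμr : ∀ S, a ≤ μ S ∧ μ S ≤ b := by
    intro S
    simp only [hμ]
    split_ifs
    · exact ⟨le_rfl, hab⟩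
    · exact ⟨hab, le_rfl⟩
    · exact ⟨(hνr S).1, (hνr S).2⟩
  have hμmono : ∀ S T : Finset (Fin n), S ⊆ T → μ S ≤ μ T := by
    intro S T hST
    by_cases hS0 : S = ∅
    · simp only [hμ, hS0, if_pos rfl]
      exact (hμr T).1
    · have hT0 : T ≠ ∅ := by
        intro h
        exact hS0 (Finset.subset_empty.1 (h ▸ hST))
      by_cases hS1 : S = Finset.univ
      · have hT1 : T = Finset.univ := Finset.univ_subset_iff.1 (hS1 ▸ hST)
        simp [hμ, hS0, hS1, hT0, hT1, hne]
      · by_cases hT1 : T = Finset.univ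
        · simp only [hμ, if_neg hS0, if_neg hS1, hT1, if_neg hne, if_pos rfl]
          exact (hνr S).2
        · simp only [hμ, if_neg hS0, if_neg hS1, if_neg hT0, if_neg hT1]
          exact hνmono S T hST
  -- facts about φ and constants
  have heuniv : e Finset.univ = fun _ => d := by
    funext j; simp [he]
  have hφd : ∀ r ∈ Set.Icc c d, φ r ≤ ν Finset.univ := by
    intro r hr
    have h1 := (hid (fun _ => d) (fun _ => hdD) d hdD).1
    have h2 : (fun i : Fin n => max d ((fun _ => d) i)) = fun _ => d := by
      funext i; simp
    rw [h2] at h1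
    have h3 : φ d ≤ f (fun _ => d) := by
      rw [h1]; exact le_max_left _ _
    calc φ r ≤ φ d := hφm r hr d hdD hr.2
      _ ≤ f (fun _ => d) := h3
      _ = ν Finset.univ := congrArg f heuniv.symm
  have hφc : f (fun _ => c) ≤ φ c := by
    have h1 := (hid (fun _ => c) (fun _ => hcD) c hcD).2
    have h2 : (fun i : Fin n => min c ((fun _ => c) i)) = fun _ => c := by
      funext i; simp
    rw [h2] at h1
    rw [h1]; exact min_le_left _ _
  refine ⟨μ, ⟨hμ0, hμ1, hμmono⟩, ?_⟩
  intro σ x hx hsort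
  set i0 : Fin n := ⟨0, hn⟩ with hi0
  set T := Finset.sup' Finset.univ ⟨i0, Finset.mem_univ _⟩
    (fun i : Fin n => min (φ (x (σ i))) (μ (SUp σ (i : ℕ)))) with hT
  apply le_antisymm
  · -- f x ≤ T via truncation chain
    set trunc : ℕ → Fin n → ℝ :=
      fun k j => if k ≤ ((σ.symm j : Fin n) : ℕ) then x j else c with htr
    have htD : ∀ k j, trunc k j ∈ Set.Icc c d := by
      intro k j
      simp only [htr]
      split
      · exact hx j
      · exact hcD
    have h0 : trunc 0 = x := by
      funext j; simp [htr]
    have htop : f (trunc n) ≤ φ c := by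
      have hte : trunc n = fun _ => c := by
        funext j
        simp only [htr]
        rw [if_neg (by exact not_le.2 (σ.symm j).isLt)]
      rw [hte]
      exact hφc
    have hstep : ∀ k (hk : k < n),
        f (trunc k) ≤ max (φ (x (σ ⟨k, hk⟩))) (f (trunc (k + 1))) := by
      intro k hk
      have hidk := (hid (trunc (k + 1)) (fun j => htD _ _) (x (σ ⟨k, hk⟩)) (hx _)).1
      rw [← hidk]
      refine hmono _ _ (fun j => htD k j) ?_ ?_
      · intro j
        exact ⟨le_trans (hx (σ ⟨k, hk⟩)).1 (le_max_left _ _),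
          max_le (hx _).2 (htD _ _).2⟩
      · intro j
        simp only [htr]
        by_cases h1 : k ≤ ((σ.symm j : Fin n) : ℕ)
        · rw [if_pos h1]
          by_cases h2 : k + 1 ≤ ((σ.symm j : Fin n) : ℕ)
          · rw [if_pos h2]
            exact le_max_right _ _
          · have h3 : ((σ.symm j : Fin n) : ℕ) = k := by omega
            have hj : j = σ ⟨k, hk⟩ := by
              have h4 : σ.symm j = ⟨k, hk⟩ := Fin.ext h3
              rw [← h4, Equiv.apply_symm_apply]
            rw [hj]
            exact le_max_left _ _
        · rw [if_neg h1]
          exact le_trans (hx (σ ⟨k, hk⟩)).1 (le_max_left _ _)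
    have hbound : ∀ k, f (trunc k) ≤ ν (SUp σ k) := by
      intro k
      refine hmono _ _ (fun j => htD k j) (heD _) ?_
      intro j
      simp only [htr, he]
      by_cases h1 : k ≤ ((σ.symm j : Fin n) : ℕ)
      · rw [if_pos h1, if_pos (mem_SUp.2 h1)]
        exact (hx j).2
      · rw [if_neg h1]
        split
        · exact hcd
        · exact le_rfl
    have hT0 : φ c ≤ T := by
      refine le_trans ?_ (Finset.le_sup' _ (Finset.mem_univ i0))
      refine le_min (hφm c hcD _ (hx _) (hx _).1) ?_
      have h5 : ((i0 : Fin n) : ℕ) = 0 := rfl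
      rw [h5, SUp_zero, hμ1]
      exact (hφr c hcD).2
    have hterm : ∀ k (hk : k < n),
        min (φ (x (σ ⟨k, hk⟩))) (ν (SUp σ k)) ≤ T := by
      intro k hk
      refine le_trans ?_ (Finset.le_sup' _ (Finset.mem_univ (⟨k, hk⟩ : Fin n)))
      show min (φ (x (σ ⟨k, hk⟩))) (ν (SUp σ k)) ≤
        min (φ (x (σ ⟨k, hk⟩))) (μ (SUp σ k))
      by_cases hk0 : k = 0
      · subst hk0
        refine le_min (min_le_left _ _) ?_
        rw [SUp_zero, hμ1]
        exact le_trans (min_le_left _ _) (hφr _ (hx _)).2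
      · have hne1 : SUp σ k ≠ ∅ := (SUp_nonempty σ hk).ne_empty
        have hne2 : SUp σ k ≠ Finset.univ := SUp_ne_univ σ hn (Nat.pos_of_ne_zero hk0)
        rw [hμ]
        simp only [if_neg hne1, if_neg hne2]
        exact le_rfl
    have hchain : ∀ j, j ≤ n → f (trunc (n - j)) ≤ T := by
      intro j
      induction j with
      | zero =>
        intro _
        simpa using le_trans htop hT0
      | succ j ih =>
        intro hj
        have hk : n - (j + 1) < n := by omega
        have hk1 : n - (j + 1) + 1 = n - j := by omega
        have h1 := hstep (n - (j + 1)) hk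
        have h2 := hbound (n - (j + 1))
        have h3 : f (trunc (n - (j + 1) + 1)) ≤ T := by
          rw [hk1]; exact ih (by omega)
        have h4 := hterm (n - (j + 1)) hk
        rcases le_max_iff.1 h1 with h | h
        · exact le_trans (le_min h h2) h4
        · exact le_trans h h3
    have := hchain n le_rfl
    rwa [Nat.sub_self, h0] at this
  · -- T ≤ f x
    refine Finset.sup'_le _ _ ?_
    intro i _
    have hw := (hid (e (SUp σ (i : ℕ))) (heD _) (x (σ i)) (hx _)).2
    have hwle : ∀ j, min (x (σ i)) (e (SUp σ (i : ℕ)) j) ≤ x j := by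
      intro j
      simp only [he]
      by_cases h1 : j ∈ SUp σ (i : ℕ)
      · rw [if_pos h1]
        refine le_trans (min_le_left _ _) ?_
        have h2 : (i : ℕ) ≤ ((σ.symm j : Fin n) : ℕ) := mem_SUp.1 h1
        have h3 : x (σ i) ≤ x (σ (σ.symm j)) := hsort (by exact h2)
        rwa [Equiv.apply_symm_apply] at h3
      · rw [if_neg h1]
        exact le_trans (min_le_right _ _) (hx j).1
    have hfw : f (fun j => min (x (σ i)) (e (SUp σ (i : ℕ)) j)) ≤ f x := by
      refine hmono _ _ ?_ hx hwle
      intro j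
      exact ⟨le_min (hx _).1 (heD _ j).1, le_trans (min_le_left _ _) (hx _).2⟩
    rw [hw] at hfw
    by_cases hi : (i : ℕ) = 0
    · rw [hi, SUp_zero, hμ1]
      have h6 : φ (x (σ i)) ≤ ν Finset.univ := hφd _ (hx _)
      calc min (φ (x (σ i))) b ≤ φ (x (σ i)) := min_le_left _ _
        _ = min (φ (x (σ i))) (ν Finset.univ) := (min_eq_left h6).symm
        _ ≤ f x := by rw [hi, SUp_zero] at hfw; exact hfw
    · have hne1 : SUp σ (i : ℕ) ≠ ∅ := (SUp_nonempty σ i.isLt).ne_empty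
      have hne2 : SUp σ (i : ℕ) ≠ Finset.univ :=
        SUp_ne_univ σ hn (Nat.pos_of_ne_zero hi)
      rw [hμ]
      simp only [if_neg hne1, if_neg hne2]
      exact hfw

end Rep
section PQ

lemma SUp_antitone {n : ℕ} (σ : Equiv.Perm (Fin n)) {k l : ℕ} (hkl : k ≤ l) :
    SUp σ l ⊆ SUp σ k := by
  intro j hj
  rw [mem_SUp] at hj ⊢
  omega

lemma maxmin_of_rep {n : ℕ} (hn : 0 < n) {a b c d : ℝ}
    {f : (Fin n → ℝ) → ℝ} {μ : Finset (Fin n) → ℝ} {φ : ℝ → ℝ}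
    (_hcap : IsCapacityOn a b μ)
    (hφm : ∀ y ∈ Set.Icc c d, ∀ z ∈ Set.Icc c d, y ≤ z → φ y ≤ φ z)
    (hrep : ∀ σ : Equiv.Perm (Fin n), ∀ x : Fin n → ℝ,
      (∀ i, x i ∈ Set.Icc c d) → Monotone (x ∘ σ) →
      f x = Finset.sup' Finset.univ ⟨⟨0, hn⟩, Finset.mem_univ _⟩
        (fun i : Fin n => min (φ (x (σ i))) (μ (SUp σ (i : ℕ))))) :
    ComonMaxitiveOn (Set.Icc c d) f ∧ ComonMinitiveOn (Set.Icc c d) f := by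
  have H : (Finset.univ : Finset (Fin n)).Nonempty := ⟨⟨0, hn⟩, Finset.mem_univ _⟩
  constructor
  · intro x y hx hy hco
    obtain ⟨σ, hxs, hys⟩ := hco
    have hxyD : ∀ i, max (x i) (y i) ∈ Set.Icc c d := fun i =>
      ⟨le_trans (hx i).1 (le_max_left _ _), max_le (hx i).2 (hy i).2⟩
    have hxys : Monotone ((fun i => max (x i) (y i)) ∘ σ) := by
      intro i j hij
      exact max_le_max (hxs hij) (hys hij)
    rw [hrep σ _ hxyD hxys, hrep σ x hx hxs, hrep σ y hy hys]
    apply le_antisymm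
    · refine Finset.sup'_le _ _ ?_
      intro i _
      rcases le_total (x (σ i)) (y (σ i)) with h | h
      · rw [max_eq_right h]
        exact le_trans (Finset.le_sup'
          (fun i : Fin n => min (φ (y (σ i))) (μ (SUp σ (i : ℕ))))
          (Finset.mem_univ i)) (le_max_right _ _)
      · rw [max_eq_left h]
        exact le_trans (Finset.le_sup'
          (fun i : Fin n => min (φ (x (σ i))) (μ (SUp σ (i : ℕ))))
          (Finset.mem_univ i)) (le_max_left _ _)
    · refine max_le ?_ ?_ <;>
      · refine Finset.sup'_le _ _ ?_
        intro i _
        refine le_trans ?_ (Finset.le_sup'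
          (fun i : Fin n => min (φ (max (x (σ i)) (y (σ i)))) (μ (SUp σ (i : ℕ))))
          (Finset.mem_univ i))
        show _ ≤ min (φ (max (x (σ i)) (y (σ i)))) (μ (SUp σ (i : ℕ)))
        refine min_le_min ?_ le_rfl
        first
        | exact hφm _ (hx _) _ (hxyD _) (le_max_left _ _)
        | exact hφm _ (hy _) _ (hxyD _) (le_max_right _ _)
  · intro x y hx hy hco
    obtain ⟨σ, hxs, hys⟩ := hco
    have hxyD : ∀ i, min (x i) (y i) ∈ Set.Icc c d := fun i =>
      ⟨le_min (hx i).1 (hy i).1, le_trans (min_le_left _ _) (hx i).2⟩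
    have hxys : Monotone ((fun i => min (x i) (y i)) ∘ σ) := by
      intro i j hij
      exact min_le_min (hxs hij) (hys hij)
    rw [hrep σ _ hxyD hxys, hrep σ x hx hxs, hrep σ y hy hys]
    apply le_antisymm
    · refine Finset.sup'_le _ _ ?_
      intro i _
      refine le_min ?_ ?_ <;>
      · refine le_trans ?_ (Finset.le_sup' _ (Finset.mem_univ i))
        refine min_le_min ?_ le_rfl
        first
        | exact hφm _ (hxyD _) _ (hx _) (min_le_left _ _)
        | exact hφm _ (hxyD _) _ (hy _) (min_le_right _ _)
    · obtain ⟨j, _, hj⟩ := Finset.exists_mem_eq_sup' H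
        (fun i : Fin n => min (φ (x (σ i))) (μ (SUp σ (i : ℕ))))
      obtain ⟨k, _, hk⟩ := Finset.exists_mem_eq_sup' H
        (fun i : Fin n => min (φ (y (σ i))) (μ (SUp σ (i : ℕ))))
      rw [hj, hk]
      have hφmin : ∀ s ∈ Set.Icc c d, ∀ t ∈ Set.Icc c d,
          φ (min s t) = min (φ s) (φ t) := by
        intro s hs t ht
        rcases le_total s t with h | h
        · rw [min_eq_left h, min_eq_left (hφm s hs t ht h)]
        · rw [min_eq_right h, min_eq_right (hφm t ht s hs h)]
      rcases le_total j k with hjk | hjk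
      · refine le_trans ?_ (Finset.le_sup'
          (fun i : Fin n => min (φ (min (x (σ i)) (y (σ i)))) (μ (SUp σ (i : ℕ))))
          (Finset.mem_univ k))
        show _ ≤ min (φ (min (x (σ k)) (y (σ k)))) (μ (SUp σ (k : ℕ)))
        rw [hφmin _ (hx _) _ (hy _)]
        refine le_min (le_min ?_ ?_) ?_
        · refine le_trans (min_le_left _ _) ?_
          refine le_trans (min_le_left _ _) ?_
          refine hφm _ (hx _) _ (hx _) ?_
          exact hxs hjk
        · exact le_trans (min_le_right _ _) (min_le_left _ _)
        · exact le_trans (min_le_right _ _) (min_le_right _ _)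
      · refine le_trans ?_ (Finset.le_sup'
          (fun i : Fin n => min (φ (min (x (σ i)) (y (σ i)))) (μ (SUp σ (i : ℕ))))
          (Finset.mem_univ j))
        show _ ≤ min (φ (min (x (σ j)) (y (σ j)))) (μ (SUp σ (j : ℕ)))
        rw [hφmin _ (hx _) _ (hy _)]
        refine le_min (le_min ?_ ?_) ?_
        · exact le_trans (min_le_left _ _) (min_le_left _ _)
        · refine le_trans (min_le_right _ _) ?_
          refine le_trans (min_le_left _ _) ?_
          refine hφm _ (hy _) _ (hy _) ?_
          exact hys hjk
        · exact le_trans (min_le_left _ _) (min_le_right _ _)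

end PQ
section Final

lemma identities_of_maxmin {n : ℕ} {c d : ℝ} {f : (Fin n → ℝ) → ℝ}
    (hmax : ComonMaxitiveOn (Set.Icc c d) f) (hmin : ComonMinitiveOn (Set.Icc c d) f) :
    ∀ x : Fin n → ℝ, (∀ i, x i ∈ Set.Icc c d) → ∀ r ∈ Set.Icc c d,
      f (fun i => max r (x i)) = max (f (fun _ => r)) (f x) ∧
      f (fun i => min r (x i)) = min (f (fun _ => r)) (f x) := by
  intro x hx r hr
  have hco : Comonotone (fun _ => r) x :=
    ⟨Tuple.sort x, monotone_const, Tuple.monotone_sort x⟩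
  constructor
  · have h := hmax (fun _ => r) x (fun _ => hr) hx hco
    simpa using h
  · have h := hmin (fun _ => r) x (fun _ => hr) hx hco
    simpa using h

lemma constφ_mono {n : ℕ} {c d : ℝ} {f : (Fin n → ℝ) → ℝ}
    (hmax : ComonMaxitiveOn (Set.Icc c d) f) :
    ∀ y ∈ Set.Icc c d, ∀ z ∈ Set.Icc c d, y ≤ z →
      f (fun _ : Fin n => y) ≤ f (fun _ => z) := by
  intro y hy z hz hyz
  exact le_of_comon_max hmax (fun _ => hy) (fun _ => hz)
    ⟨Equiv.refl _, monotone_const, monotone_const⟩ (fun _ => hyz)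

end Final

theorem statement18 (n : ℕ) (hn : 0 < n) (a b c d : ℝ) (hab : a < b) (hcd : c < d)
    (f : (Fin n → ℝ) → ℝ)
    (hfI : ∀ x : Fin n → ℝ, (∀ i, x i ∈ Set.Icc c d) → f x ∈ Set.Icc a b) :
    ((∃ μ : Finset (Fin n) → ℝ, ∃ φ : ℝ → ℝ, IsCapacityOn a b μ ∧
        (∀ y ∈ Set.Icc c d, ∀ z ∈ Set.Icc c d, y ≤ z → φ y ≤ φ z) ∧
        (∀ y ∈ Set.Icc c d, φ y ∈ Set.Icc a b) ∧
        ∀ σ : Equiv.Perm (Fin n), ∀ x : Fin n → ℝ,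
          (∀ i, x i ∈ Set.Icc c d) → Monotone (x ∘ σ) →
          f x = Finset.sup' Finset.univ ⟨⟨0, hn⟩, Finset.mem_univ _⟩
            (fun i : Fin n => min (φ (x (σ i))) (μ (SUp σ (i : ℕ)))))
      ↔ (ComonMaxitiveOn (Set.Icc c d) f ∧ ComonMinitiveOn (Set.Icc c d) f))
    ∧
    ((∃ μ : Finset (Fin n) → ℝ, ∃ φ : ℝ → ℝ, IsCapacityOn a b μ ∧
        (∀ y ∈ Set.Icc c d, ∀ z ∈ Set.Icc c d, y ≤ z → φ y ≤ φ z) ∧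
        (∀ y ∈ Set.Icc c d, φ y ∈ Set.Icc a b) ∧
        ∀ σ : Equiv.Perm (Fin n), ∀ x : Fin n → ℝ,
          (∀ i, x i ∈ Set.Icc c d) → Monotone (x ∘ σ) →
          f x = Finset.sup' Finset.univ ⟨⟨0, hn⟩, Finset.mem_univ _⟩
            (fun i : Fin n => min (φ (x (σ i))) (μ (SUp σ (i : ℕ)))))
      ↔ (NondecreasingOn (Set.Icc c d) f ∧
          ∃ φ : ℝ → ℝ, (∀ y ∈ Set.Icc c d, ∀ z ∈ Set.Icc c d, y ≤ z → φ y ≤ φ z) ∧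
            (∀ y ∈ Set.Icc c d, φ y ∈ Set.Icc a b) ∧
            ∀ x : Fin n → ℝ, (∀ i, x i ∈ Set.Icc c d) → ∀ r ∈ Set.Icc c d,
              f (fun i => max r (x i)) = max (φ r) (f x) ∧
              f (fun i => min r (x i)) = min (φ r) (f x)))
    ∧
    ((∃ μ : Finset (Fin n) → ℝ, ∃ φ : ℝ → ℝ, IsCapacityOn a b μ ∧
        (∀ y ∈ Set.Icc c d, ∀ z ∈ Set.Icc c d, y ≤ z → φ y ≤ φ z) ∧
        (∀ y ∈ Set.Icc c d, φ y ∈ Set.Icc a b) ∧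
        ∀ σ : Equiv.Perm (Fin n), ∀ x : Fin n → ℝ,
          (∀ i, x i ∈ Set.Icc c d) → Monotone (x ∘ σ) →
          f x = Finset.sup' Finset.univ ⟨⟨0, hn⟩, Finset.mem_univ _⟩
            (fun i : Fin n => min (φ (x (σ i))) (μ (SUp σ (i : ℕ)))))
      → (NondecreasingOn (Set.Icc c d) f ∧
          ∀ x : Fin n → ℝ, (∀ i, x i ∈ Set.Icc c d) → ∀ r ∈ Set.Icc c d,
            f (fun i => max r (x i)) = max (f (fun _ => r)) (f x) ∧
            f (fun i => min r (x i)) = min (f (fun _ => r)) (f x))) := by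
  have PtoQ : (∃ μ : Finset (Fin n) → ℝ, ∃ φ : ℝ → ℝ, IsCapacityOn a b μ ∧
      (∀ y ∈ Set.Icc c d, ∀ z ∈ Set.Icc c d, y ≤ z → φ y ≤ φ z) ∧
      (∀ y ∈ Set.Icc c d, φ y ∈ Set.Icc a b) ∧
      ∀ σ : Equiv.Perm (Fin n), ∀ x : Fin n → ℝ,
        (∀ i, x i ∈ Set.Icc c d) → Monotone (x ∘ σ) →
        f x = Finset.sup' Finset.univ ⟨⟨0, hn⟩, Finset.mem_univ _⟩
          (fun i : Fin n => min (φ (x (σ i))) (μ (SUp σ (i : ℕ))))) →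
      ComonMaxitiveOn (Set.Icc c d) f ∧ ComonMinitiveOn (Set.Icc c d) f := by
    rintro ⟨μ, φ, hcap, hφm, hφr, hrep⟩
    exact maxmin_of_rep hn hcap hφm hrep
  have RtoP : ∀ φ : ℝ → ℝ, NondecreasingOn (Set.Icc c d) f →
      (∀ y ∈ Set.Icc c d, ∀ z ∈ Set.Icc c d, y ≤ z → φ y ≤ φ z) →
      (∀ y ∈ Set.Icc c d, φ y ∈ Set.Icc a b) →
      (∀ x : Fin n → ℝ, (∀ i, x i ∈ Set.Icc c d) → ∀ r ∈ Set.Icc c d,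
        f (fun i => max r (x i)) = max (φ r) (f x) ∧
        f (fun i => min r (x i)) = min (φ r) (f x)) →
      (∃ μ : Finset (Fin n) → ℝ, ∃ φ : ℝ → ℝ, IsCapacityOn a b μ ∧
        (∀ y ∈ Set.Icc c d, ∀ z ∈ Set.Icc c d, y ≤ z → φ y ≤ φ z) ∧
        (∀ y ∈ Set.Icc c d, φ y ∈ Set.Icc a b) ∧
        ∀ σ : Equiv.Perm (Fin n), ∀ x : Fin n → ℝ,
          (∀ i, x i ∈ Set.Icc c d) → Monotone (x ∘ σ) →
          f x = Finset.sup' Finset.univ ⟨⟨0, hn⟩, Finset.mem_univ _⟩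
            (fun i : Fin n => min (φ (x (σ i))) (μ (SUp σ (i : ℕ))))) := by
    intro φ hnd hφm hφr hid
    obtain ⟨μ, hcap, hrep⟩ := rep_of_identities hn hab.le hcd.le hfI hnd φ hφm hφr hid
    exact ⟨μ, φ, hcap, hφm, hφr, hrep⟩
  have QtoR : ComonMaxitiveOn (Set.Icc c d) f ∧ ComonMinitiveOn (Set.Icc c d) f →
      NondecreasingOn (Set.Icc c d) f ∧
      (∀ x : Fin n → ℝ, (∀ i, x i ∈ Set.Icc c d) → ∀ r ∈ Set.Icc c d,
        f (fun i => max r (x i)) = max (f (fun _ => r)) (f x) ∧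
        f (fun i => min r (x i)) = min (f (fun _ => r)) (f x)) := by
    rintro ⟨hmax, hmin⟩
    exact ⟨nondecreasing_of_comonMax hcd.le hmax, identities_of_maxmin hmax hmin⟩
  refine ⟨⟨PtoQ, ?_⟩, ⟨?_, ?_⟩, ?_⟩
  · rintro ⟨hmax, hmin⟩
    exact RtoP _ (nondecreasing_of_comonMax hcd.le hmax) (constφ_mono hmax)
      (fun y hy => hfI _ (fun _ => hy)) (identities_of_maxmin hmax hmin)
  · intro hP
    obtain ⟨hmax, hmin⟩ := PtoQ hP
    exact ⟨nondecreasing_of_comonMax hcd.le hmax,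
      fun r => f (fun _ => r), constφ_mono hmax,
      fun y hy => hfI _ (fun _ => hy), identities_of_maxmin hmax hmin⟩
  · rintro ⟨hnd, φ, hφm, hφr, hid⟩
    exact RtoP φ hnd hφm hφr hid
  · intro hP
    exact QtoR (PtoQ hP)
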